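/- arXiv:2210.09701 — 2 statements merged into one kernel-verified Lean document; each statement's English description precedes it below -/
import Mathlib

section
/- If v : ℝ³ → ℝ³ is a homogeneous vector-valued polynomial of degree q+1 such that x · v(x) = 0 for all x, then v belongs to the Nédélec space ND_q = [P_q]³ + x × [P_q]³, where [P_q]³ denotes vector polynomials of degree at most q. -/
open Matrix

section Aux
open MvPolynomial

lemma degree_fin3 (d : Fin 3 →₀ ℕ) : d.degree = ∑ j : Fin 3, d j := by
  rw [Finsupp.degree]
  apply Finset.sum_subset (Finset.subset_univ _)
  exact fun x _ hx => Finsupp.notMem_support_iff.mp hx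

lemma sub_single_add (d : Fin 3 →₀ ℕ) (j : Fin 3) (h : d j ≠ 0) :
    Finsupp.single j 1 + (d - Finsupp.single j 1) = d := by
  ext k
  by_cases hk : k = j
  · subst hk; simp [Finsupp.single_apply]; omega
  · simp [Finsupp.single_apply, Ne.symm hk]

lemma X_mul_pderiv_monomial (j : Fin 3) (d : Fin 3 →₀ ℕ) (c : ℝ) :
    X j * pderiv j (monomial d c) = (d j : ℝ) • monomial d c := by
  by_cases h : d j = 0
  · simp [pderiv_monomial, h]
  · rw [pderiv_monomial, X, monomial_mul, one_mul, sub_single_add d j h, smul_monomial,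
      smul_eq_mul, mul_comm]

lemma euler {n : ℕ} {p : MvPolynomial (Fin 3) ℝ} (hp : p.IsHomogeneous n) :
    ∑ j : Fin 3, X j * pderiv j p = (n : ℝ) • p := by
  conv_lhs => rw [← p.support_sum_monomial_coeff]
  conv_rhs => rw [← p.support_sum_monomial_coeff]
  simp_rw [map_sum, Finset.mul_sum, X_mul_pderiv_monomial, Finset.smul_sum]
  rw [Finset.sum_comm]
  refine Finset.sum_congr rfl fun d hd => ?_
  rw [← Finset.sum_smul]
  congr 1
  have : d.degree = n := by
    rw [Finsupp.degree_eq_weight_one]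
    exact hp (mem_support_iff.mp hd)
  rw [degree_fin3] at this
  rw [← this]
  push_cast
  rfl

lemma pderiv_homog {n : ℕ} {p : MvPolynomial (Fin 3) ℝ} (hp : p.IsHomogeneous (n + 1))
    (j : Fin 3) : (pderiv j p).IsHomogeneous n := by
  conv_lhs => rw [← p.support_sum_monomial_coeff]
  rw [map_sum]
  apply IsHomogeneous.sum
  intro d hd
  rw [pderiv_monomial]
  by_cases h : d j = 0
  · simp [h]
    exact isHomogeneous_zero _ _ _
  · apply isHomogeneous_monomial
    have hdeg : d.degree = n + 1 := by
      rw [Finsupp.degree_eq_weight_one]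
      exact hp (mem_support_iff.mp hd)
    rw [degree_fin3] at hdeg ⊢
    have hj := h
    simp only [Finsupp.tsub_apply]
    fin_cases j <;>
      simp [Finsupp.single_apply, Fin.sum_univ_three] at hdeg hj ⊢ <;> omega

end Aux

/-- `v` is a vector-valued polynomial map with each component of total degree at most `q`. -/
def IsPolyMapDeg (q : ℕ) (v : (Fin 3 → ℝ) → Fin 3 → ℝ) : Prop :=
  ∃ p : Fin 3 → MvPolynomial (Fin 3) ℝ,
    (∀ i, (p i).totalDegree ≤ q) ∧ ∀ x i, v x i = MvPolynomial.eval x (p i)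

/-- `v` is a vector-valued polynomial map with each component homogeneous of degree `d`. -/
def IsHomogPolyMap (d : ℕ) (v : (Fin 3 → ℝ) → Fin 3 → ℝ) : Prop :=
  ∃ p : Fin 3 → MvPolynomial (Fin 3) ℝ,
    (∀ i, (p i).IsHomogeneous d) ∧ ∀ x i, v x i = MvPolynomial.eval x (p i)

/-- Membership in the Nédélec space `ND_q = [P_q]³ + x × [P_q]³`. -/
def MemNedelec (q : ℕ) (v : (Fin 3 → ℝ) → Fin 3 → ℝ) : Prop :=
  ∃ v₁ v₂, IsPolyMapDeg q v₁ ∧ IsPolyMapDeg q v₂ ∧ ∀ x, v x = v₁ x + x ⨯₃ (v₂ x)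

theorem homog_orthogonal_mem_Nedelec (q : ℕ) (v : (Fin 3 → ℝ) → Fin 3 → ℝ)
    (hv : IsHomogPolyMap (q + 1) v) (horth : ∀ x, x ⬝ᵥ v x = 0) :
    MemNedelec q v := by
  classical
  open MvPolynomial in
  obtain ⟨p, hph, hpe⟩ := hv
  set c : ℝ := -(1 / ((q : ℝ) + 2)) with hc
  -- the curl of p
  set curl : Fin 3 → MvPolynomial (Fin 3) ℝ :=
    ![pderiv 1 (p 2) - pderiv 2 (p 1),
      pderiv 2 (p 0) - pderiv 0 (p 2),
      pderiv 0 (p 1) - pderiv 1 (p 0)] with hcurl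
  set w : Fin 3 → MvPolynomial (Fin 3) ℝ := fun i => C c * curl i with hw
  -- orthogonality as a polynomial identity
  have hS : (X 0 * p 0 + X 1 * p 1 + X 2 * p 2 : MvPolynomial (Fin 3) ℝ) = 0 := by
    apply MvPolynomial.funext
    intro x
    have h := horth x
    simp only [dotProduct, Fin.sum_univ_three] at h
    simp only [map_add, eval_mul, eval_X, map_zero]
    rw [hpe x 0, hpe x 1, hpe x 2] at h
    linarith [h]
  -- derivatives of hS
  have hD : ∀ j : Fin 3, (pderiv j) (X 0 * p 0 + X 1 * p 1 + X 2 * p 2) = 0 := by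
    intro j; rw [hS]; simp
  have hD0 : p 0 + X 0 * pderiv 0 (p 0) + X 1 * pderiv 0 (p 1) + X 2 * pderiv 0 (p 2) = 0 := by
    have h := hD 0
    simp [pderiv_mul, pderiv_X, Pi.single_apply] at h
    linear_combination h
  have hD1 : p 1 + X 0 * pderiv 1 (p 0) + X 1 * pderiv 1 (p 1) + X 2 * pderiv 1 (p 2) = 0 := by
    have h := hD 1
    simp [pderiv_mul, pderiv_X, Pi.single_apply] at h
    linear_combination h
  have hD2 : p 2 + X 0 * pderiv 2 (p 0) + X 1 * pderiv 2 (p 1) + X 2 * pderiv 2 (p 2) = 0 := by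
    have h := hD 2
    simp [pderiv_mul, pderiv_X, Pi.single_apply] at h
    linear_combination h
  -- Euler identities
  have E0 := euler (hph 0)
  have E1 := euler (hph 1)
  have E2 := euler (hph 2)
  simp only [Fin.sum_univ_three] at E0 E1 E2
  refine ⟨0, fun x i => eval x (w i), ⟨fun _ => 0, fun _ => by simp, by simp⟩,
    ⟨w, ?_, fun x i => rfl⟩, ?_⟩
  · -- degree bound
    intro i
    have h1 : (w i).IsHomogeneous q := by
      have hc0 : (C c : MvPolynomial (Fin 3) ℝ).IsHomogeneous 0 := isHomogeneous_C _ _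
      have hcurlq : (curl i).IsHomogeneous q := by
        fin_cases i <;>
          exact Submodule.sub_mem (homogeneousSubmodule (Fin 3) ℝ q)
            (pderiv_homog (hph _) _) (pderiv_homog (hph _) _)
      have := hc0.mul hcurlq
      rwa [zero_add] at this
    exact h1.totalDegree_le
  · -- the identity v = 0 + x × w
    intro x
    funext i
    have hq2 : ((q : ℝ) + 2) ≠ 0 := by positivity
    have eD0 := congrArg (eval x) hD0
    have eD1 := congrArg (eval x) hD1
    have eD2 := congrArg (eval x) hD2
    have eE0 := congrArg (eval x) E0
    have eE1 := congrArg (eval x) E1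
    have eE2 := congrArg (eval x) E2
    simp only [map_add, map_sub, _root_.map_mul, eval_X, map_zero, smul_eq_C_mul,
      eval_C] at eD0 eD1 eD2 eE0 eE1 eE2
    simp only [Pi.add_apply, Pi.zero_apply, zero_add, cross_apply]
    rw [hpe x i]
    push_cast at eE0 eE1 eE2
    fin_cases i <;>
    simp only [Fin.zero_eta, Fin.mk_one, Fin.reduceFinMk] <;>
    simp only [hw, hcurl, Matrix.cons_val_zero, Matrix.cons_val_one, Matrix.head_cons,
        Matrix.cons_val_two, Matrix.tail_cons, map_sub, _root_.map_mul, eval_C, eval_X,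
        Matrix.cons_val_fin_one, Fin.isValue] <;>
    rw [hc] <;> field_simp
    · linear_combination eD0 - eE0
    · linear_combination eD1 - eE1
    · have h2 : (p ⟨2, by norm_num⟩ : MvPolynomial (Fin 3) ℝ) = p 2 := rfl
      linear_combination eD2 - eE2
end

section
/- The Nédélec space ND_q := [P_q]³ + x × [P_q]³ on ℝ³ is a direct sum of [P_q]³ and the space of maps x ↦ x × p(x) where p ranges over homogeneous vector polynomials of degree q; that is, ND_q = [P_q]³ ⊕ {x × p(x) : p homogeneous of degree q}. -/
open Matrix

/-- `v` is of the form `x ↦ x × p(x)` with `p` a homogeneous vector polynomial of degree `q`. -/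
def MemCrossHomog (q : ℕ) (v : (Fin 3 → ℝ) → Fin 3 → ℝ) : Prop :=
  ∃ p, IsHomogPolyMap q p ∧ ∀ x, v x = x ⨯₃ (p x)

open MvPolynomial


noncomputable def polyCross (p : Fin 3 → MvPolynomial (Fin 3) ℝ) : Fin 3 → MvPolynomial (Fin 3) ℝ :=
  ![X 1 * p 2 - X 2 * p 1, X 2 * p 0 - X 0 * p 2, X 0 * p 1 - X 1 * p 0]

lemma eval_polyCross (p : Fin 3 → MvPolynomial (Fin 3) ℝ) (x : Fin 3 → ℝ) (i : Fin 3) :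
    MvPolynomial.eval x (polyCross p i) = (x ⨯₃ fun j => MvPolynomial.eval x (p j)) i := by
  fin_cases i <;> simp [polyCross, cross_apply]

lemma polyCross_homog {p : Fin 3 → MvPolynomial (Fin 3) ℝ} {d : ℕ}
    (h : ∀ i, (p i).IsHomogeneous d) (i : Fin 3) : (polyCross p i).IsHomogeneous (d+1) := by
  have hX : ∀ j : Fin 3, (X j : MvPolynomial (Fin 3) ℝ).IsHomogeneous 1 :=
    fun j => isHomogeneous_X _ _
  rw [add_comm]
  fin_cases i <;> exact ((hX _).mul (h _)).sub ((hX _).mul (h _))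

lemma polyCross_deg {p : Fin 3 → MvPolynomial (Fin 3) ℝ} {q : ℕ}
    (h : ∀ i, (p i).totalDegree + 1 ≤ q ∨ p i = 0) (i : Fin 3) :
    (polyCross p i).totalDegree ≤ q := by
  have key : ∀ j k : Fin 3, (X j * p k : MvPolynomial (Fin 3) ℝ).totalDegree ≤ q := by
    intro j k
    rcases h k with hk | hk
    · calc (X j * p k).totalDegree ≤ (X j : MvPolynomial (Fin 3) ℝ).totalDegree
            + (p k).totalDegree := totalDegree_mul _ _
        _ = (p k).totalDegree + 1 := by rw [totalDegree_X]; ring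
        _ ≤ q := hk
    · simp [hk]
  fin_cases i <;>
    exact le_trans (totalDegree_sub _ _) (max_le (key _ _) (key _ _))

lemma rem_deg {q : ℕ} (s : MvPolynomial (Fin 3) ℝ) (hs : s.totalDegree ≤ q) :
    (s - homogeneousComponent q s).totalDegree + 1 ≤ q ∨ s - homogeneousComponent q s = 0 := by
  set r := s - homogeneousComponent q s with hr
  by_cases h0 : r = 0
  · right; exact h0
  left
  have hmem : ∀ m ∈ r.support, (m.sum fun _ e => e) < q := by
    intro m hm
    have hc : coeff m r ≠ 0 := mem_support_iff.mp hm
    rw [hr, coeff_sub, coeff_homogeneousComponent] at hc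
    have hdeg : m.degree = m.sum fun _ e => e := by
      simp [Finsupp.degree, Finsupp.sum]
      rfl
    by_cases hq : m.degree = q
    · simp [hq] at hc
    · have hc' : coeff m s ≠ 0 := by
        intro h; rw [if_neg hq] at hc; simp [h] at hc
      have := le_totalDegree (mem_support_iff.mpr hc')
      omega
  obtain ⟨m0, hm0⟩ := (MvPolynomial.support_nonempty).mpr h0
  have hq0 : 0 < q := lt_of_le_of_lt (Nat.zero_le _) (hmem m0 hm0)
  have hlt : r.totalDegree < q := by
    rw [totalDegree]
    exact (Finset.sup_lt_iff hq0).mpr hmem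
  omega

/-- `ND_q = [P_q]³ ⊕ {x × p(x) : p homogeneous of degree q}`: every element of `ND_q`
decomposes as a sum of the two pieces, and the two pieces intersect trivially. -/
theorem nedelec_directSum (q : ℕ) :
    (∀ v, MemNedelec q v ↔
        ∃ v₁ v₂, IsPolyMapDeg q v₁ ∧ MemCrossHomog q v₂ ∧ ∀ x, v x = v₁ x + v₂ x) ∧
    (∀ v, IsPolyMapDeg q v → MemCrossHomog q v → ∀ x, v x = 0) := by
  constructor
  · intro v
    constructor
    · rintro ⟨v₁, v₂, ⟨p₁, hp₁d, hp₁⟩, ⟨p₂, hp₂d, hp₂⟩, hsum⟩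
      set h : Fin 3 → MvPolynomial (Fin 3) ℝ := fun i => homogeneousComponent q (p₂ i) with hh
      set r : Fin 3 → MvPolynomial (Fin 3) ℝ := fun i => p₂ i - h i with hrr
      refine ⟨fun x i => MvPolynomial.eval x (p₁ i + polyCross r i),
        fun x => x ⨯₃ (fun i => MvPolynomial.eval x (h i)), ?_, ?_, ?_⟩
      · refine ⟨fun i => p₁ i + polyCross r i, fun i => ?_, fun x i => rfl⟩
        refine le_trans (totalDegree_add _ _) (max_le (hp₁d i) ?_)
        refine polyCross_deg (fun j => ?_) i
        rcases rem_deg (p₂ j) (hp₂d j) with hj | hj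
        · exact Or.inl hj
        · exact Or.inr hj
      · exact ⟨fun x i => MvPolynomial.eval x (h i),
          ⟨h, fun i => homogeneousComponent_isHomogeneous q (p₂ i), fun x i => rfl⟩, fun x => rfl⟩
      · intro x
        funext i
        have hev : ∀ j, MvPolynomial.eval x (p₂ j)
            = MvPolynomial.eval x (r j) + MvPolynomial.eval x (h j) := by
          intro j; rw [hrr]; simp
        have hcross : (x ⨯₃ (v₂ x)) i
            = (x ⨯₃ fun j => MvPolynomial.eval x (r j)) i
              + (x ⨯₃ fun j => MvPolynomial.eval x (h j)) i := by
          have : v₂ x = (fun j => MvPolynomial.eval x (r j))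
              + (fun j => MvPolynomial.eval x (h j)) := by
            funext j; simpa using (by rw [hp₂ x j, hev j])
          rw [this, LinearMap.map_add]; rfl
        rw [hsum x]
        simp only [Pi.add_apply, hcross, hp₁ x i, map_add, eval_polyCross]
        ring
    · rintro ⟨v₁, v₂, h₁, ⟨p, ⟨pp, hpph, hpp⟩, hv₂⟩, hsum⟩
      refine ⟨v₁, p, h₁, ⟨pp, fun i => ((hpph i).totalDegree_le), hpp⟩, fun x => ?_⟩
      rw [hsum x, hv₂ x]
  · rintro v ⟨a, had, ha⟩ ⟨p, ⟨b, hbh, hb⟩, hv⟩ x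
    have hpoly : ∀ i, a i = polyCross b i := by
      intro i
      apply MvPolynomial.funext
      intro y
      rw [← ha y i, eval_polyCross]
      have : p y = fun j => MvPolynomial.eval y (b j) := funext (hb y)
      rw [hv y, this]
    have hzero : ∀ i, a i = 0 := by
      intro i
      by_contra h0
      have hhom : (a i).IsHomogeneous (q + 1) := hpoly i ▸ polyCross_homog hbh i
      have := hhom.totalDegree h0
      have := had i
      omega
    funext i
    rw [ha x i, hzero i, map_zero]
    rfl
end
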